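/- The algebra D_q(m|n) generated by the q-derivatives ∂_i (i = 1,…,m+n) on the quantum Grassmann superalgebra Ω_q(m|n) is isomorphic as an associative superalgebra to the quantum affine (m|n)-superspace A_q^{m|n}: the assignment v_i ↦ ∂_i extends to an algebra isomorphism. -/

import Mathlib

set_option maxHeartbeats 1000000

/-- Index set of the monomial basis `x^(β) ⊗ x^μ` of `Ω_q(m|n)`. -/
abbrev OmegaIdx (m n : ℕ) := (Fin m → ℕ) × (Fin n → ℕ)

/-- The underlying vector space of the quantum Grassmann superalgebra `Ω_q(m|n)`. -/
abbrev Omega (k : Type*) [Field k] (m n : ℕ) := OmegaIdx m n →₀ k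

/-- Image of the basis vector `x^(β) ⊗ x^μ` under the `q`-derivative `∂_i`. -/
noncomputable def Dimage {k : Type*} [Field k] (q : k) (m n : ℕ)
    (i : Fin (m + n)) (p : OmegaIdx m n) : Omega k m n :=
  if h : (i : ℕ) < m then
    if p.1 ⟨i, h⟩ = 0 then 0
    else (q ^ (-(∑ s ∈ Finset.univ.filter (fun s : Fin m => (s : ℕ) < (i : ℕ)),
          (p.1 s : ℤ)))) • Finsupp.single (p.1 - Pi.single ⟨i, h⟩ 1, p.2) 1
  else
    if p.2 ⟨(i : ℕ) - m, by have := i.isLt; omega⟩ = 1 then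
      (q ^ (-(∑ s, (p.1 s : ℤ))) *
          (-q) ^ (-(∑ t ∈ Finset.univ.filter (fun t : Fin n => (t : ℕ) < (i : ℕ) - m),
            (p.2 t : ℤ)))) •
        Finsupp.single (p.1, p.2 - Pi.single ⟨(i : ℕ) - m, by have := i.isLt; omega⟩ 1) 1
    else 0

/-- The `q`-derivative `∂_i` on `Ω_q(m|n)` as an endomorphism. -/
noncomputable def Dop {k : Type*} [Field k] (q : k) (m n : ℕ) (i : Fin (m + n)) :
    Module.End k (Omega k m n) :=
  Finsupp.lsum k fun p => LinearMap.toSpanSingleton k (Omega k m n) (Dimage q m n i p)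

/-- The defining relations of the quantum affine `(m|n)`-superspace `A_q^{m|n}`. -/
inductive SupRel {k : Type*} [Field k] (q : k) (m n : ℕ) :
    FreeAlgebra k (Fin (m + n)) → FreeAlgebra k (Fin (m + n)) → Prop
  | qcomm (i j : Fin (m + n)) (hi : (i : ℕ) < m) (hij : i < j) :
      SupRel q m n (FreeAlgebra.ι k j * FreeAlgebra.ι k i)
        (q • (FreeAlgebra.ι k i * FreeAlgebra.ι k j))
  | sq (i : Fin (m + n)) (hi : m ≤ (i : ℕ)) :
      SupRel q m n (FreeAlgebra.ι k i * FreeAlgebra.ι k i) 0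
  | anti (i j : Fin (m + n)) (hi : m ≤ (i : ℕ)) (hij : i < j) :
      SupRel q m n (FreeAlgebra.ι k j * FreeAlgebra.ι k i)
        (-(q • (FreeAlgebra.ι k i * FreeAlgebra.ι k j)))

namespace DqAux

/-! ### Embeddings and basic lemmas -/

def eb (m n : ℕ) (s : Fin m) : Fin (m + n) := Fin.castAdd n s
def ef (m n : ℕ) (t : Fin n) : Fin (m + n) := Fin.natAdd m t

lemma eb_val {m n : ℕ} (s : Fin m) : ((eb m n s : Fin (m + n)) : ℕ) = s := rfl
lemma ef_val {m n : ℕ} (t : Fin n) : ((ef m n t : Fin (m + n)) : ℕ) = m + t := rfl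
lemma eb_lt {m n : ℕ} (s : Fin m) : ((eb m n s : Fin (m + n)) : ℕ) < m := s.isLt
lemma ef_not_lt {m n : ℕ} (t : Fin n) : ¬ ((ef m n t : Fin (m + n)) : ℕ) < m := by
  rw [ef_val]; omega
lemma ef_sub {m n : ℕ} (t : Fin n) : ((ef m n t : Fin (m + n)) : ℕ) - m = (t : ℕ) := by
  rw [ef_val]; omega

lemma ef_surj {m n : ℕ} (i : Fin (m + n)) (hi : m ≤ (i : ℕ)) :
    ∃ t : Fin n, i = ef m n t := by
  refine ⟨⟨(i : ℕ) - m, by have := i.isLt; omega⟩, ?_⟩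
  apply Fin.ext
  rw [ef_val]
  simp
  omega

section Field
variable {k : Type*} [Field k] {q : k} {m n : ℕ}

lemma Dop_single (q : k) (i : Fin (m + n)) (p : OmegaIdx m n) :
    Dop q m n i (Finsupp.single p 1) = Dimage q m n i p := by
  simp [Dop, Finsupp.lsum_single, LinearMap.toSpanSingleton_apply]

lemma Dimage_eb (q : k) (p : OmegaIdx m n) (s : Fin m) :
    Dimage q m n (eb m n s) p =
      if p.1 s = 0 then 0
      else (q ^ (-(∑ u ∈ Finset.univ.filter (fun u : Fin m => (u : ℕ) < (s : ℕ)),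
            (p.1 u : ℤ)))) • Finsupp.single (p.1 - Pi.single s 1, p.2) 1 := by
  rw [Dimage, dif_pos (eb_lt s)]
  rfl

lemma Dimage_ef (q : k) (p : OmegaIdx m n) (t : Fin n) :
    Dimage q m n (ef m n t) p =
      if p.2 t = 1 then
        (q ^ (-(∑ s, (p.1 s : ℤ))) *
            (-q) ^ (-(∑ u ∈ Finset.univ.filter (fun u : Fin n => (u : ℕ) < (t : ℕ)),
              (p.2 u : ℤ)))) •
          Finsupp.single (p.1, p.2 - Pi.single t 1) 1
      else 0 := by
  rw [Dimage, dif_neg (ef_not_lt t)]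
  simp only [ef_sub, Fin.eta]

lemma end_ext {f g : Module.End k (Omega k m n)}
    (h : ∀ p, f (Finsupp.single p 1) = g (Finsupp.single p 1)) : f = g := by
  refine Finsupp.lhom_ext fun p b => ?_
  have hb : (Finsupp.single p b : Omega k m n) = b • Finsupp.single p 1 := by
    rw [Finsupp.smul_single, smul_eq_mul, mul_one]
  rw [hb, map_smul, map_smul, h]

lemma sub_single_apply_ne {N : ℕ} (f : Fin N → ℕ) (i j : Fin N) (h : j ≠ i) :
    (f - Pi.single i 1 : Fin N → ℕ) j = f j := by
  simp [Pi.sub_apply, Pi.single_eq_of_ne h]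

lemma sum_sub_single {N : ℕ} (f : Fin N → ℕ) (i : Fin N) (hf : f i ≠ 0) (s : Finset (Fin N)) :
    ∑ u ∈ s, (((f - Pi.single i 1 : Fin N → ℕ) u : ℕ) : ℤ)
      = (∑ u ∈ s, (f u : ℤ)) - (if i ∈ s then 1 else 0) := by
  have h : ∀ u ∈ s, (((f - Pi.single i 1 : Fin N → ℕ) u : ℕ) : ℤ)
      = (f u : ℤ) - (if u = i then (1 : ℤ) else 0) := by
    intro u _
    have h1 : 1 ≤ f i := Nat.one_le_iff_ne_zero.mpr hf
    by_cases hu : u = i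
    · subst hu
      simp [Pi.sub_apply]
      omega
    · rw [sub_single_apply_ne f i u hu, if_neg hu, sub_zero]
  rw [Finset.sum_congr rfl h, Finset.sum_sub_distrib,
    Finset.sum_ite_eq' s i (fun _ => (1 : ℤ))]

/-! ### Relations among the `∂_i` -/

lemma Dimage_eb' (q : k) (a : Fin m → ℕ) (b : Fin n → ℕ) (s : Fin m) :
    Dimage q m n (eb m n s) (a, b) =
      if a s = 0 then 0
      else (q ^ (-(∑ u ∈ Finset.univ.filter (fun u : Fin m => (u : ℕ) < (s : ℕ)),
            (a u : ℤ)))) • Finsupp.single (a - Pi.single s 1, b) 1 :=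
  Dimage_eb q (a, b) s

lemma Dimage_ef' (q : k) (a : Fin m → ℕ) (b : Fin n → ℕ) (t : Fin n) :
    Dimage q m n (ef m n t) (a, b) =
      if b t = 1 then
        (q ^ (-(∑ s, (a s : ℤ))) *
            (-q) ^ (-(∑ u ∈ Finset.univ.filter (fun u : Fin n => (u : ℕ) < (t : ℕ)),
              (b u : ℤ)))) •
          Finsupp.single (a, b - Pi.single t 1) 1
      else 0 :=
  Dimage_ef q (a, b) t

lemma rel_qcomm (hq : q ≠ 0) (i j : Fin (m + n)) (hi : (i : ℕ) < m) (hij : i < j) :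
    Dop q m n j * Dop q m n i = q • (Dop q m n i * Dop q m n j) := by
  refine end_ext fun p => ?_
  obtain ⟨a, b⟩ := p
  rw [Module.End.mul_apply, LinearMap.smul_apply, Module.End.mul_apply, Dop_single, Dop_single]
  have hieq : i = eb m n ⟨i, hi⟩ := rfl
  set i' : Fin m := ⟨i, hi⟩ with hi'
  by_cases hj : (j : ℕ) < m
  · -- both bosonic
    have hjeq : j = eb m n ⟨j, hj⟩ := rfl
    set j' : Fin m := ⟨j, hj⟩ with hj'
    have hij' : (i' : ℕ) < (j' : ℕ) := hij
    have hne : j' ≠ i' := by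
      simp only [Fin.ne_iff_vne]; omega
    rw [hieq, hjeq, Dimage_eb', Dimage_eb']
    by_cases h1 : a i' = 0
    · rw [if_pos h1, map_zero]
      by_cases h2 : a j' = 0
      · rw [if_pos h2, map_zero, smul_zero]
      · rw [if_neg h2, map_smul, Dop_single, Dimage_eb']
        have h1' : (a - Pi.single j' 1 : Fin m → ℕ) i' = 0 := by
          rw [sub_single_apply_ne _ _ _ (Ne.symm hne)]; exact h1
        rw [if_pos h1', smul_zero, smul_zero]
    · rw [if_neg h1, map_smul, Dop_single, Dimage_eb']
      by_cases h2 : a j' = 0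
      · have h2' : (a - Pi.single i' 1 : Fin m → ℕ) j' = 0 := by
          rw [sub_single_apply_ne _ _ _ hne]; exact h2
        rw [if_pos h2', if_pos h2, map_zero, smul_zero, smul_zero]
      · have h2' : ¬ (a - Pi.single i' 1 : Fin m → ℕ) j' = 0 := by
          rw [sub_single_apply_ne _ _ _ hne]; exact h2
        rw [if_neg h2', if_neg h2, map_smul, Dop_single, Dimage_eb']
        have h1' : ¬ (a - Pi.single j' 1 : Fin m → ℕ) i' = 0 := by
          rw [sub_single_apply_ne _ _ _ (Ne.symm hne)]; exact h1
        rw [if_neg h1', smul_smul, smul_smul, smul_smul]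
        have hidx : (a - Pi.single i' 1 - Pi.single j' 1 : Fin m → ℕ)
            = (a - Pi.single j' 1 - Pi.single i' 1 : Fin m → ℕ) := by
          funext u
          simp only [Pi.sub_apply]
          omega
        rw [hidx]
        congr 1
        rw [sum_sub_single a i' h1, sum_sub_single a j' h2]
        have hmem : i' ∈ Finset.univ.filter (fun u : Fin m => (u : ℕ) < (j' : ℕ)) := by
          simp only [Finset.mem_filter, Finset.mem_univ, true_and]
          exact hij'
        have hnmem : j' ∉ Finset.univ.filter (fun u : Fin m => (u : ℕ) < (i' : ℕ)) := by
          simp only [Finset.mem_filter, Finset.mem_univ, true_and]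
          omega
        rw [if_pos hmem, if_neg hnmem, sub_zero]
        have he : -((∑ u ∈ Finset.univ.filter (fun u : Fin m => (u : ℕ) < (j' : ℕ)),
            (a u : ℤ)) - 1)
            = 1 + -(∑ u ∈ Finset.univ.filter (fun u : Fin m => (u : ℕ) < (j' : ℕ)),
              (a u : ℤ)) := by ring
        rw [he, zpow_one_add₀ hq]
        ring
  · -- i bosonic, j fermionic
    obtain ⟨j₂, hjeq⟩ := ef_surj j (le_of_not_gt hj)
    rw [hieq, hjeq, Dimage_eb', Dimage_ef']
    by_cases h1 : a i' = 0
    · rw [if_pos h1, map_zero]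
      by_cases h2 : b j₂ = 1
      · rw [if_pos h2, map_smul, Dop_single, Dimage_eb', if_pos h1, smul_zero, smul_zero]
      · rw [if_neg h2, map_zero, smul_zero]
    · rw [if_neg h1, map_smul, Dop_single, Dimage_ef']
      by_cases h2 : b j₂ = 1
      · rw [if_pos h2, if_pos h2, map_smul, Dop_single, Dimage_eb', if_neg h1,
          smul_smul, smul_smul, smul_smul]
        congr 1
        rw [sum_sub_single a i' h1 Finset.univ, if_pos (Finset.mem_univ i')]
        have he : -((∑ u, (a u : ℤ)) - 1) = 1 + -(∑ u, (a u : ℤ)) := by ring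
        rw [he, zpow_one_add₀ hq]
        ring
      · rw [if_neg h2, if_neg h2, map_zero, smul_zero, smul_zero]

lemma rel_sq (q : k) (i : Fin (m + n)) (hi : m ≤ (i : ℕ)) :
    Dop q m n i * Dop q m n i = 0 := by
  refine end_ext fun p => ?_
  obtain ⟨a, b⟩ := p
  rw [Module.End.mul_apply, Dop_single]
  obtain ⟨i₂, hieq⟩ := ef_surj i hi
  rw [hieq, Dimage_ef']
  by_cases h1 : b i₂ = 1
  · rw [if_pos h1, map_smul, Dop_single, Dimage_ef']
    have h2 : ¬ (b - Pi.single i₂ 1 : Fin n → ℕ) i₂ = 1 := by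
      simp only [Pi.sub_apply, Pi.single_eq_same]
      omega
    rw [if_neg h2, smul_zero]
    simp
  · rw [if_neg h1, map_zero]
    simp

lemma rel_anti (hq : q ≠ 0) (i j : Fin (m + n)) (hi : m ≤ (i : ℕ)) (hij : i < j) :
    Dop q m n j * Dop q m n i = -(q • (Dop q m n i * Dop q m n j)) := by
  have hq' : (-q) ≠ 0 := neg_ne_zero.mpr hq
  refine end_ext fun p => ?_
  obtain ⟨a, b⟩ := p
  rw [Module.End.mul_apply, LinearMap.neg_apply, LinearMap.smul_apply, Module.End.mul_apply,
    Dop_single, Dop_single]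
  have hjm : m ≤ (j : ℕ) := le_trans hi (le_of_lt hij)
  obtain ⟨i₂, hieq⟩ := ef_surj i hi
  obtain ⟨j₂, hjeq⟩ := ef_surj j hjm
  have hij2 : (i₂ : ℕ) < (j₂ : ℕ) := by
    have h1 : (i : ℕ) < (j : ℕ) := hij
    have h2 : (i : ℕ) = m + (i₂ : ℕ) := by rw [hieq, ef_val]
    have h3 : (j : ℕ) = m + (j₂ : ℕ) := by rw [hjeq, ef_val]
    omega
  have hne : j₂ ≠ i₂ := by simp only [Fin.ne_iff_vne]; omega
  rw [hieq, hjeq, Dimage_ef', Dimage_ef']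
  by_cases h1 : b i₂ = 1
  · rw [if_pos h1, map_smul, Dop_single, Dimage_ef']
    by_cases h2 : b j₂ = 1
    · have h2' : (b - Pi.single i₂ 1 : Fin n → ℕ) j₂ = 1 := by
        rw [sub_single_apply_ne _ _ _ hne]; exact h2
      rw [if_pos h2', if_pos h2, map_smul, Dop_single, Dimage_ef']
      have h1' : (b - Pi.single j₂ 1 : Fin n → ℕ) i₂ = 1 := by
        rw [sub_single_apply_ne _ _ _ (Ne.symm hne)]; exact h1
      rw [if_pos h1', smul_smul, smul_smul, smul_smul]
      have hidx : (b - Pi.single i₂ 1 - Pi.single j₂ 1 : Fin n → ℕ)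
          = (b - Pi.single j₂ 1 - Pi.single i₂ 1 : Fin n → ℕ) := by
        funext u; simp only [Pi.sub_apply]; omega
      rw [hidx, ← neg_smul]
      congr 1
      rw [sum_sub_single b i₂ (by omega), sum_sub_single b j₂ (by omega)]
      have hmem : i₂ ∈ Finset.univ.filter (fun u : Fin n => (u : ℕ) < (j₂ : ℕ)) := by
        simp only [Finset.mem_filter, Finset.mem_univ, true_and]
        exact hij2
      have hnmem : j₂ ∉ Finset.univ.filter (fun u : Fin n => (u : ℕ) < (i₂ : ℕ)) := by
        simp only [Finset.mem_filter, Finset.mem_univ, true_and]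
        omega
      rw [if_pos hmem, if_neg hnmem, sub_zero]
      have he : -((∑ u ∈ Finset.univ.filter (fun u : Fin n => (u : ℕ) < (j₂ : ℕ)),
          (b u : ℤ)) - 1)
          = 1 + -(∑ u ∈ Finset.univ.filter (fun u : Fin n => (u : ℕ) < (j₂ : ℕ)),
            (b u : ℤ)) := by ring
      rw [he, zpow_one_add₀ hq']
      ring
    · have h2' : ¬ (b - Pi.single i₂ 1 : Fin n → ℕ) j₂ = 1 := by
        rw [sub_single_apply_ne _ _ _ hne]; exact h2
      rw [if_neg h2', if_neg h2, map_zero, smul_zero, smul_zero, neg_zero]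
  · rw [if_neg h1, map_zero]
    by_cases h2 : b j₂ = 1
    · rw [if_pos h2, map_smul, Dop_single, Dimage_ef']
      have h1' : ¬ (b - Pi.single j₂ 1 : Fin n → ℕ) i₂ = 1 := by
        rw [sub_single_apply_ne _ _ _ (Ne.symm hne)]; exact h1
      rw [if_neg h1', smul_zero, smul_zero, neg_zero]
    · rw [if_neg h2, map_zero, smul_zero, neg_zero]

end Field

/-! ### The quotient algebra side -/

section Alg
variable (k : Type*) [Field k] (q : k) (m n : ℕ)

noncomputable def G (i : Fin (m + n)) : RingQuot (SupRel q m n) :=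
  RingQuot.mkAlgHom k (SupRel q m n) (FreeAlgebra.ι k i)

lemma gr_qcomm (i j : Fin (m + n)) (hi : (i : ℕ) < m) (hij : i < j) :
    G k q m n j * G k q m n i = q • (G k q m n i * G k q m n j) := by
  have h := RingQuot.mkAlgHom_rel k (SupRel.qcomm (q := q) i j hi hij)
  rw [map_mul, map_smul, map_mul] at h
  exact h

lemma gr_sq (i : Fin (m + n)) (hi : m ≤ (i : ℕ)) :
    G k q m n i * G k q m n i = 0 := by
  have h := RingQuot.mkAlgHom_rel k (SupRel.sq (q := q) i hi)
  rw [map_mul, map_zero] at h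
  exact h

lemma gr_anti (i j : Fin (m + n)) (hi : m ≤ (i : ℕ)) (hij : i < j) :
    G k q m n j * G k q m n i = (-q) • (G k q m n i * G k q m n j) := by
  have h := RingQuot.mkAlgHom_rel k (SupRel.anti (q := q) i j hi hij)
  rw [map_mul, map_neg, map_smul, map_mul] at h
  have hn : (-q) • (G k q m n i * G k q m n j) = -(q • (G k q m n i * G k q m n j)) :=
    neg_smul (R := k) (M := RingQuot (SupRel q m n)) q (G k q m n i * G k q m n j)
  rw [hn]
  exact h

noncomputable def Qm (l : List (Fin m)) : RingQuot (SupRel q m n) :=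
  (l.map (fun s => G k q m n (eb m n s))).prod

noncomputable def Rm (l : List (Fin n)) : RingQuot (SupRel q m n) :=
  (l.map (fun t => G k q m n (ef m n t))).prod

lemma Qm_nil : Qm k q m n [] = 1 := rfl
lemma Rm_nil : Rm k q m n [] = 1 := rfl

lemma Qm_cons (s : Fin m) (l : List (Fin m)) :
    Qm k q m n (s :: l) = G k q m n (eb m n s) * Qm k q m n l := by
  simp [Qm]

lemma Rm_cons (t : Fin n) (l : List (Fin n)) :
    Rm k q m n (t :: l) = G k q m n (ef m n t) * Rm k q m n l := by
  simp [Rm]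

lemma eb_lt_eb {s s' : Fin m} (h : s < s') : eb m n s < eb m n s' := by
  rw [Fin.lt_def]
  exact h

lemma eb_lt_ef (s : Fin m) (t : Fin n) : eb m n s < ef m n t := by
  rw [Fin.lt_def]
  show ((eb m n s : Fin (m + n)) : ℕ) < ((ef m n t : Fin (m + n)) : ℕ)
  rw [eb_val, ef_val]
  omega

lemma ef_lt_ef {t t' : Fin n} (h : t < t') : ef m n t < ef m n t' := by
  rw [Fin.lt_def]
  show ((ef m n t : Fin (m + n)) : ℕ) < ((ef m n t' : Fin (m + n)) : ℕ)
  rw [ef_val, ef_val]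
  omega

lemma Qins (i : Fin m) (l : List (Fin m)) :
    ∃ c : k, G k q m n (eb m n i) * Qm k q m n l
      = c • Qm k q m n (List.orderedInsert (· ≤ ·) i l) := by
  induction l with
  | nil => exact ⟨1, by simp [Qm]⟩
  | cons hd l ih =>
    by_cases hle : i ≤ hd
    · refine ⟨1, ?_⟩
      simp only [List.orderedInsert, if_pos hle]
      rw [one_smul]
      simp only [Qm_cons]
    · have hlt : hd < i := lt_of_not_ge hle
      obtain ⟨c, hc⟩ := ih
      refine ⟨q * c, ?_⟩
      have hrel := gr_qcomm k q m n (eb m n hd) (eb m n i) (eb_lt hd) (eb_lt_eb m n hlt)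
      simp only [List.orderedInsert, if_neg hle]
      rw [Qm_cons, ← mul_assoc, hrel, smul_mul_assoc, mul_assoc, hc, mul_smul_comm,
        smul_smul, Qm_cons]

lemma passQ (t : Fin n) (l : List (Fin m)) :
    ∃ c : k, G k q m n (ef m n t) * Qm k q m n l
      = c • (Qm k q m n l * G k q m n (ef m n t)) := by
  induction l with
  | nil => exact ⟨1, by simp [Qm]⟩
  | cons hd l ih =>
    obtain ⟨c, hc⟩ := ih
    refine ⟨q * c, ?_⟩
    have hrel := gr_qcomm k q m n (eb m n hd) (ef m n t) (eb_lt hd) (eb_lt_ef m n hd t)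
    rw [Qm_cons, ← mul_assoc, hrel, smul_mul_assoc, mul_assoc, hc, mul_smul_comm,
      smul_smul]
    congr 1
    rw [mul_assoc]

lemma Rins (t : Fin n) (l : List (Fin n)) (hl : l.Pairwise (· ≤ ·)) :
    (t ∈ l ∧ G k q m n (ef m n t) * Rm k q m n l = 0) ∨
    (t ∉ l ∧ ∃ c : k, G k q m n (ef m n t) * Rm k q m n l
        = c • Rm k q m n (List.orderedInsert (· ≤ ·) t l)) := by
  induction l with
  | nil =>
    right
    refine ⟨List.not_mem_nil, 1, ?_⟩
    simp [Rm]
  | cons hd l ih =>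
    rcases eq_or_ne t hd with rfl | hne
    · left
      refine ⟨List.mem_cons_self, ?_⟩
      rw [Rm_cons, ← mul_assoc, gr_sq k q m n (ef m n t) (le_of_not_gt (ef_not_lt t)), zero_mul]
    · rcases lt_or_gt_of_ne hne with hlt | hgt
      · right
        have hnm : t ∉ hd :: l := by
          intro hmem
          rcases List.mem_cons.mp hmem with h | h
          · exact hne h
          · exact absurd (List.rel_of_pairwise_cons hl h) (not_le.mpr hlt)
        refine ⟨hnm, 1, ?_⟩
        simp only [List.orderedInsert, if_pos (le_of_lt hlt)]
        rw [one_smul]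
        simp only [Rm_cons]
      · have hrel := gr_anti k q m n (ef m n hd) (ef m n t)
          (le_of_not_gt (ef_not_lt hd)) (ef_lt_ef m n hgt)
        rcases ih hl.of_cons with ⟨hmem, h0⟩ | ⟨hnm, c, hc⟩
        · left
          refine ⟨List.mem_cons_of_mem hd hmem, ?_⟩
          rw [Rm_cons, ← mul_assoc, hrel, smul_mul_assoc, mul_assoc, h0, mul_zero, smul_zero]
        · right
          have hnm' : t ∉ hd :: l := by
            intro hmem
            rcases List.mem_cons.mp hmem with h | h
            · exact hne h
            · exact hnm h
          refine ⟨hnm', (-q) * c, ?_⟩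
          simp only [List.orderedInsert, if_neg (not_le.mpr hgt)]
          rw [Rm_cons, ← mul_assoc, hrel, smul_mul_assoc, mul_assoc, hc, mul_smul_comm,
            smul_smul, Rm_cons]

/-- Index type for the sorted monomials. -/
def SP (m n : ℕ) :=
  {w : List (Fin m) × List (Fin n) //
    w.1.Pairwise (· ≤ ·) ∧ w.2.Pairwise (· ≤ ·) ∧ w.2.Nodup}

noncomputable def Wm (w : SP m n) : RingQuot (SupRel q m n) :=
  Qm k q m n w.1.1 * Rm k q m n w.1.2

def Ssub : Submodule k (RingQuot (SupRel q m n)) :=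
  Submodule.span k (Set.range (Wm k q m n))

lemma closure (i : Fin (m + n)) (w : SP m n) :
    ∃ (c : k) (w' : SP m n), G k q m n i * Wm k q m n w = c • Wm k q m n w' := by
  obtain ⟨⟨lb, lf⟩, hsb, hsf, hnd⟩ := w
  by_cases hb : (i : ℕ) < m
  · have hieq : i = eb m n ⟨i, hb⟩ := rfl
    obtain ⟨c, hc⟩ := Qins k q m n ⟨i, hb⟩ lb
    refine ⟨c, ⟨(List.orderedInsert (· ≤ ·) ⟨i, hb⟩ lb, lf),
      List.Pairwise.orderedInsert _ _ hsb, hsf, hnd⟩, ?_⟩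
    show G k q m n i * (Qm k q m n lb * Rm k q m n lf)
        = c • (Qm k q m n (List.orderedInsert (· ≤ ·) ⟨i, hb⟩ lb) * Rm k q m n lf)
    conv_lhs => rw [hieq]
    rw [← mul_assoc, hc, smul_mul_assoc]
  · obtain ⟨t, hieq⟩ := ef_surj i (le_of_not_gt hb)
    obtain ⟨c1, hc1⟩ := passQ k q m n t lb
    rcases Rins k q m n t lf hsf with ⟨hm', h0⟩ | ⟨hnm, c2, hc2⟩
    · refine ⟨0, ⟨(lb, lf), hsb, hsf, hnd⟩, ?_⟩
      show G k q m n i * (Qm k q m n lb * Rm k q m n lf) = (0 : k) • _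
      rw [hieq, ← mul_assoc, hc1, smul_mul_assoc, mul_assoc, h0, mul_zero, smul_zero,
        zero_smul]
    · refine ⟨c1 * c2, ⟨(lb, List.orderedInsert (· ≤ ·) t lf), hsb,
        List.Pairwise.orderedInsert _ _ hsf,
        ((List.perm_orderedInsert _ t lf).nodup_iff).mpr (List.nodup_cons.mpr ⟨hnm, hnd⟩)⟩, ?_⟩
      show G k q m n i * (Qm k q m n lb * Rm k q m n lf)
          = (c1 * c2) • (Qm k q m n lb * Rm k q m n _)
      rw [hieq, ← mul_assoc, hc1, smul_mul_assoc, mul_assoc, hc2, mul_smul_comm, smul_smul]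

def Tsub : Subalgebra k (RingQuot (SupRel q m n)) where
  carrier := {a | ∀ x ∈ Ssub k q m n, a * x ∈ Ssub k q m n}
  mul_mem' := by
    intro a b ha hb x hx
    rw [mul_assoc]
    exact ha _ (hb _ hx)
  one_mem' := by
    intro x hx
    rw [one_mul]
    exact hx
  add_mem' := by
    intro a b ha hb x hx
    rw [add_mul]
    exact (Ssub k q m n).add_mem (ha _ hx) (hb _ hx)
  zero_mem' := by
    intro x hx
    rw [zero_mul]
    exact (Ssub k q m n).zero_mem
  algebraMap_mem' := by
    intro r x hx
    rw [← Algebra.smul_def]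
    exact (Ssub k q m n).smul_mem r hx

lemma G_mem_T (i : Fin (m + n)) : G k q m n i ∈ Tsub k q m n := by
  intro x hx
  induction hx using Submodule.span_induction with
  | mem x hx =>
    obtain ⟨w, rfl⟩ := hx
    obtain ⟨c, w', hw⟩ := closure k q m n i w
    rw [hw]
    exact Submodule.smul_mem _ _ (Submodule.subset_span ⟨w', rfl⟩)
  | zero =>
    rw [mul_zero]
    exact Submodule.zero_mem _
  | add x y _ _ hx hy =>
    rw [mul_add]
    exact Submodule.add_mem _ hx hy
  | smul c x _ hx =>
    rw [mul_smul_comm]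
    exact Submodule.smul_mem _ _ hx

lemma adjoin_G_top : Algebra.adjoin k (Set.range (G k q m n)) = ⊤ := by
  have h1 : Set.range (G k q m n)
      = ⇑(RingQuot.mkAlgHom k (SupRel q m n)) '' Set.range (FreeAlgebra.ι k) := by
    rw [← Set.range_comp]
    rfl
  rw [h1, ← AlgHom.map_adjoin, FreeAlgebra.adjoin_range_ι, Algebra.map_top, eq_top_iff]
  intro x _
  obtain ⟨y, rfl⟩ := RingQuot.mkAlgHom_surjective k (SupRel q m n) x
  exact ⟨y, rfl⟩

lemma memS (a : RingQuot (SupRel q m n)) : a ∈ Ssub k q m n := by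
  have hT : (⊤ : Subalgebra k (RingQuot (SupRel q m n))) ≤ Tsub k q m n := by
    rw [← adjoin_G_top k q m n]
    apply Algebra.adjoin_le
    rintro _ ⟨i, rfl⟩
    exact G_mem_T k q m n i
  have h1 : (1 : RingQuot (SupRel q m n)) ∈ Ssub k q m n := by
    apply Submodule.subset_span
    refine ⟨⟨([], []), List.Pairwise.nil, List.Pairwise.nil, List.nodup_nil⟩, ?_⟩
    show Qm k q m n [] * Rm k q m n [] = 1
    rw [Qm_nil, Rm_nil, one_mul]
  have ha : a ∈ Tsub k q m n := hT (by trivial)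
  have := ha 1 h1
  rwa [mul_one] at this

end Alg

/-! ### Counting side -/

section Cnt
variable {k : Type*} [Field k] (m n : ℕ)

def de (i : Fin (m + n)) : OmegaIdx m n :=
  if h : (i : ℕ) < m then (Pi.single ⟨i, h⟩ 1, 0)
  else (0, Pi.single ⟨(i : ℕ) - m, by have := i.isLt; omega⟩ 1)

lemma de_eb (s : Fin m) : de m n (eb m n s) = (Pi.single s 1, 0) := by
  rw [de, dif_pos (eb_lt s)]
  rfl

lemma de_ef (t : Fin n) : de m n (ef m n t) = (0, Pi.single t 1) := by
  rw [de, dif_neg (ef_not_lt t)]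
  simp only [ef_sub, Fin.eta]

def cntL (l : List (Fin (m + n))) : OmegaIdx m n := (l.map (de m n)).sum

lemma cntL_nil : cntL m n [] = 0 := rfl

lemma cntL_cons (i : Fin (m + n)) (l : List (Fin (m + n))) :
    cntL m n (i :: l) = de m n i + cntL m n l := by
  simp [cntL]

lemma arith_b {N : ℕ} (a p : Fin N → ℕ) (i : Fin N) :
    (a ≤ p ∧ (p - a : Fin N → ℕ) i ≠ 0) ↔ Pi.single i 1 + a ≤ p := by
  simp only [Pi.le_def, Pi.sub_apply, Pi.add_apply, Pi.single_apply]
  constructor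
  · rintro ⟨h1, h2⟩ s
    have hi := h1 i
    have hs := h1 s
    split_ifs with h
    · subst h; omega
    · omega
  · intro h
    have hi := h i
    simp at hi
    refine ⟨fun s => ?_, by omega⟩
    have hs := h s
    split_ifs at hs <;> omega

lemma arith_f {N : ℕ} (a p : Fin N → ℕ) (i : Fin N) (hp : ∀ t, p t ≤ 1) :
    (a ≤ p ∧ (p - a : Fin N → ℕ) i = 1) ↔ Pi.single i 1 + a ≤ p := by
  simp only [Pi.le_def, Pi.sub_apply, Pi.add_apply, Pi.single_apply]
  constructor
  · rintro ⟨h1, h2⟩ s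
    have hi := h1 i
    have hs := h1 s
    split_ifs with h
    · subst h; omega
    · omega
  · intro h
    have hi := h i
    have hpi := hp i
    simp at hi
    refine ⟨fun s => ?_, by omega⟩
    have hs := h s
    split_ifs at hs <;> omega

lemma pair_le_b (a p : OmegaIdx m n) (i : Fin m) :
    ((Pi.single i 1, (0 : Fin n → ℕ)) + a ≤ p) ↔ (a ≤ p ∧ (p.1 - a.1 : Fin m → ℕ) i ≠ 0) := by
  constructor
  · intro h
    obtain ⟨h1, h2⟩ := (arith_b a.1 p.1 i).mpr h.1
    have h3 : a.2 ≤ p.2 := by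
      have h' : (0 : Fin n → ℕ) + a.2 ≤ p.2 := h.2
      rwa [zero_add] at h'
    exact ⟨⟨h1, h3⟩, h2⟩
  · rintro ⟨⟨h1, h3⟩, h2⟩
    refine ⟨(arith_b a.1 p.1 i).mp ⟨h1, h2⟩, ?_⟩
    show (0 : Fin n → ℕ) + a.2 ≤ p.2
    rwa [zero_add]

lemma pair_le_f (a p : OmegaIdx m n) (t : Fin n) (hp : ∀ u, p.2 u ≤ 1) :
    (((0 : Fin m → ℕ), Pi.single t 1) + a ≤ p) ↔ (a ≤ p ∧ (p.2 - a.2 : Fin n → ℕ) t = 1) := by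
  constructor
  · intro h
    obtain ⟨h1, h2⟩ := (arith_f a.2 p.2 t hp).mpr h.2
    have h3 : a.1 ≤ p.1 := by
      have h' : (0 : Fin m → ℕ) + a.1 ≤ p.1 := h.1
      rwa [zero_add] at h'
    exact ⟨⟨h3, h1⟩, h2⟩
  · rintro ⟨⟨h3, h1⟩, h2⟩
    refine ⟨?_, (arith_f a.2 p.2 t hp).mp ⟨h1, h2⟩⟩
    show (0 : Fin m → ℕ) + a.1 ≤ p.1
    rwa [zero_add]

end Cnt

/-! ### The key computation -/

section Key
variable {k : Type*} [Field k]

lemma key (q : k) {m n : ℕ} (hq : q ≠ 0) (l : List (Fin (m + n))) (p : OmegaIdx m n) :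
    ∃ c : k, ((l.map (Dop q m n)).prod) (Finsupp.single p 1)
        = c • Finsupp.single (p - cntL m n l) 1 ∧
      ((∀ t, p.2 t ≤ 1) → (c ≠ 0 ↔ cntL m n l ≤ p)) := by
  induction l with
  | nil =>
    refine ⟨1, ?_, fun _ => ?_⟩
    · rw [List.map_nil, List.prod_nil, cntL_nil, one_smul]
      have : p - (0 : OmegaIdx m n) = p := by
        refine Prod.ext ?_ ?_ <;> rfl
      rw [this]
      rfl
    · rw [cntL_nil]
      constructor
      · intro _
        exact ⟨fun s => Nat.zero_le _, fun t => Nat.zero_le _⟩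
      · intro _
        exact one_ne_zero
  | cons i l ih =>
    obtain ⟨c, hc, hiff⟩ := ih
    rw [List.map_cons, List.prod_cons, Module.End.mul_apply, hc, map_smul, Dop_single,
      cntL_cons]
    by_cases hb : (i : ℕ) < m
    · have hieq : i = eb m n ⟨i, hb⟩ := rfl
      rw [hieq, Dimage_eb, de_eb]
      by_cases h0 : (p - cntL m n l).1 ⟨i, hb⟩ = 0
      · refine ⟨0, ?_, fun hp => ?_⟩
        · rw [if_pos h0, smul_zero, zero_smul]
        · constructor
          · intro h
            exact absurd rfl h
          · intro hle
            exfalso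
            obtain ⟨_, h0'⟩ := (pair_le_b m n (cntL m n l) p ⟨i, hb⟩).mp hle
            exact h0' h0
      · refine ⟨c * (q ^ (-(∑ u ∈ Finset.univ.filter
            (fun u : Fin m => (u : ℕ) < ((⟨i, hb⟩ : Fin m) : ℕ)),
            ((p - cntL m n l).1 u : ℤ)))), ?_, fun hp => ?_⟩
        · have hidx : ((p - cntL m n l).1 - Pi.single (⟨i, hb⟩ : Fin m) 1, (p - cntL m n l).2)
              = p - ((Pi.single (⟨i, hb⟩ : Fin m) 1, (0 : Fin n → ℕ)) + cntL m n l) := by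
            refine Prod.ext ?_ ?_
            · funext u
              show (p.1 u - (cntL m n l).1 u) - (Pi.single (⟨i, hb⟩ : Fin m) 1 : Fin m → ℕ) u
                = p.1 u - ((Pi.single (⟨i, hb⟩ : Fin m) 1 : Fin m → ℕ) u + (cntL m n l).1 u)
              omega
            · funext u
              show p.2 u - (cntL m n l).2 u = p.2 u - (0 + (cntL m n l).2 u)
              omega
          rw [if_neg h0, hidx, smul_smul]
        · rw [mul_ne_zero_iff]
          have hz : q ^ (-(∑ u ∈ Finset.univ.filter
              (fun u : Fin m => (u : ℕ) < ((⟨i, hb⟩ : Fin m) : ℕ)),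
              ((p - cntL m n l).1 u : ℤ))) ≠ 0 := zpow_ne_zero _ hq
          constructor
          · rintro ⟨hc0, -⟩
            exact (pair_le_b m n (cntL m n l) p ⟨i, hb⟩).mpr ⟨(hiff hp).mp hc0, h0⟩
          · intro hle
            obtain ⟨hle1, -⟩ := (pair_le_b m n (cntL m n l) p ⟨i, hb⟩).mp hle
            exact ⟨(hiff hp).mpr hle1, hz⟩
    · obtain ⟨t, hieq⟩ := ef_surj i (le_of_not_gt hb)
      rw [hieq, Dimage_ef, de_ef]
      by_cases h0 : (p - cntL m n l).2 t = 1
      · refine ⟨c * (q ^ (-(∑ s, ((p - cntL m n l).1 s : ℤ))) *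
            (-q) ^ (-(∑ u ∈ Finset.univ.filter (fun u : Fin n => (u : ℕ) < (t : ℕ)),
              ((p - cntL m n l).2 u : ℤ)))), ?_, fun hp => ?_⟩
        · have hidx : ((p - cntL m n l).1, (p - cntL m n l).2 - Pi.single t 1)
              = p - (((0 : Fin m → ℕ), Pi.single t 1) + cntL m n l) := by
            refine Prod.ext ?_ ?_
            · funext u
              show p.1 u - (cntL m n l).1 u = p.1 u - (0 + (cntL m n l).1 u)
              omega
            · funext u
              show (p.2 u - (cntL m n l).2 u) - (Pi.single t 1 : Fin n → ℕ) u
                = p.2 u - ((Pi.single t 1 : Fin n → ℕ) u + (cntL m n l).2 u)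
              omega
          rw [if_pos h0, hidx, smul_smul]
        · rw [mul_ne_zero_iff]
          have hz : (q ^ (-(∑ s, ((p - cntL m n l).1 s : ℤ))) *
              (-q) ^ (-(∑ u ∈ Finset.univ.filter (fun u : Fin n => (u : ℕ) < (t : ℕ)),
                ((p - cntL m n l).2 u : ℤ)))) ≠ 0 :=
            mul_ne_zero (zpow_ne_zero _ hq) (zpow_ne_zero _ (neg_ne_zero.mpr hq))
          constructor
          · rintro ⟨hc0, -⟩
            exact (pair_le_f m n (cntL m n l) p t hp).mpr ⟨(hiff hp).mp hc0, h0⟩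
          · intro hle
            obtain ⟨hle1, -⟩ := (pair_le_f m n (cntL m n l) p t hp).mp hle
            exact ⟨(hiff hp).mpr hle1, hz⟩
      · refine ⟨0, ?_, fun hp => ?_⟩
        · rw [if_neg h0, smul_zero, zero_smul]
        · constructor
          · intro h
            exact absurd rfl h
          · intro hle
            exfalso
            obtain ⟨-, h0'⟩ := (pair_le_f m n (cntL m n l) p t hp).mp hle
            exact h0 h0'

end Key

/-! ### Monomial counting -/

section Pc
variable (m n : ℕ)

def pcnt (w : List (Fin m) × List (Fin n)) : OmegaIdx m n :=
  (fun s => w.1.count s, fun t => w.2.count t)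

lemma cntL_append (l1 l2 : List (Fin (m + n))) :
    cntL m n (l1 ++ l2) = cntL m n l1 + cntL m n l2 := by
  simp [cntL]

lemma cntL_map_eb (l : List (Fin m)) :
    cntL m n (l.map (eb m n)) = (fun s => (l.count s : ℕ), 0) := by
  induction l with
  | nil =>
    refine Prod.ext ?_ ?_ <;> funext u <;> simp [cntL_nil]
  | cons hd l ih =>
    rw [List.map_cons, cntL_cons, ih, de_eb]
    refine Prod.ext ?_ ?_
    · funext s
      show (Pi.single hd 1 : Fin m → ℕ) s + l.count s = (hd :: l).count s
      by_cases hs : s = hd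
      · subst hs
        rw [List.count_cons_self, Pi.single_eq_same]
        omega
      · rw [List.count_cons_of_ne (Ne.symm hs), Pi.single_eq_of_ne hs, zero_add]
    · funext t
      show (0 : ℕ) + 0 = 0
      simp

lemma cntL_map_ef (l : List (Fin n)) :
    cntL m n (l.map (ef m n)) = (0, fun t => (l.count t : ℕ)) := by
  induction l with
  | nil =>
    refine Prod.ext ?_ ?_ <;> funext u <;> simp [cntL_nil]
  | cons hd l ih =>
    rw [List.map_cons, cntL_cons, ih, de_ef]
    refine Prod.ext ?_ ?_
    · funext s
      show (0 : ℕ) + 0 = 0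
      simp
    · funext t
      show (Pi.single hd 1 : Fin n → ℕ) t + l.count t = (hd :: l).count t
      by_cases hs : t = hd
      · subst hs
        rw [List.count_cons_self, Pi.single_eq_same]
        omega
      · rw [List.count_cons_of_ne (Ne.symm hs), Pi.single_eq_of_ne hs, zero_add]

lemma cntL_pair (w : List (Fin m) × List (Fin n)) :
    cntL m n (w.1.map (eb m n) ++ w.2.map (ef m n)) = pcnt m n w := by
  rw [cntL_append, cntL_map_eb, cntL_map_ef]
  refine Prod.ext ?_ ?_ <;> funext u
  · show w.1.count u + 0 = w.1.count u
    simp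
  · show 0 + w.2.count u = w.2.count u
    simp

lemma oi_sub_self (p : OmegaIdx m n) : p - p = 0 := by
  refine Prod.ext ?_ ?_ <;> funext u <;> exact Nat.sub_self _

lemma oi_sub_eq_zero {x y : OmegaIdx m n} (h : x - y = 0) : x ≤ y := by
  have h1 := congrArg Prod.fst h
  have h2 := congrArg Prod.snd h
  refine ⟨fun s => ?_, fun t => ?_⟩
  · exact Nat.sub_eq_zero_iff_le.mp (congrFun h1 s)
  · exact Nat.sub_eq_zero_iff_le.mp (congrFun h2 t)

lemma pcnt_le_one (w : SP m n) : ∀ t, (pcnt m n w.1).2 t ≤ 1 :=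
  fun t => List.nodup_iff_count_le_one.mp w.2.2.2 t

lemma pcnt_inj (w w' : SP m n) (h : pcnt m n w.1 = pcnt m n w'.1) : w = w' := by
  obtain ⟨⟨lb, lf⟩, hsb, hsf, hnd⟩ := w
  obtain ⟨⟨lb', lf'⟩, hsb', hsf', hnd'⟩ := w'
  have h1 : lb = lb' :=
    List.Perm.eq_of_pairwise (fun _ _ _ _ h1 h2 => le_antisymm h1 h2) hsb hsb'
      (List.perm_iff_count.mpr fun s => congrFun (congrArg Prod.fst h) s)
  have h2 : lf = lf' :=
    List.Perm.eq_of_pairwise (fun _ _ _ _ h1 h2 => le_antisymm h1 h2) hsf hsf'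
      (List.perm_iff_count.mpr fun t => congrFun (congrArg Prod.snd h) t)
  subst h1
  subst h2
  rfl

end Pc

/-! ### The homomorphism and the isomorphism -/

section Hom
variable (k : Type*) [Field k] (q : k) (m n : ℕ)

noncomputable def FF (hq : q ≠ 0) :
    RingQuot (SupRel q m n) →ₐ[k] Module.End k (Omega k m n) :=
  (RingQuot.liftAlgHom k (s := SupRel q m n))
    ⟨FreeAlgebra.lift k (Dop q m n), by
      intro x y h
      induction h with
      | qcomm i j hi hij =>
        simp only [map_mul, map_smul, FreeAlgebra.lift_ι_apply]
        exact rel_qcomm hq i j hi hij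
      | sq i hi =>
        simp only [map_mul, map_zero, FreeAlgebra.lift_ι_apply]
        exact rel_sq q i hi
      | anti i j hi hij =>
        simp only [map_mul, map_neg, map_smul, FreeAlgebra.lift_ι_apply]
        exact rel_anti hq i j hi hij⟩

lemma FF_G (hq : q ≠ 0) (i : Fin (m + n)) :
    FF k q m n hq (G k q m n i) = Dop q m n i := by
  unfold FF G
  rw [RingQuot.liftAlgHom_mkAlgHom_apply, FreeAlgebra.lift_ι_apply]

lemma FF_W (hq : q ≠ 0) (w : SP m n) :
    FF k q m n hq (Wm k q m n w)
      = (((w.1.1.map (eb m n) ++ w.1.2.map (ef m n)).map (Dop q m n)).prod) := by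
  show FF k q m n hq (Qm k q m n w.1.1 * Rm k q m n w.1.2) = _
  unfold Qm Rm
  rw [map_mul, map_list_prod, map_list_prod, List.map_map, List.map_map,
    List.map_append, List.prod_append, List.map_map, List.map_map]
  congr 2
  · exact congrArg (fun f => List.map f w.1.1) (funext fun s => FF_G k q m n hq (eb m n s))
  · exact congrArg (fun f => List.map f w.1.2) (funext fun t => FF_G k q m n hq (ef m n t))

lemma FF_range (hq : q ≠ 0) :
    (FF k q m n hq).range
      = Algebra.adjoin k (Set.range fun i : Fin (m + n) => Dop q m n i) := by
  apply le_antisymm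
  · rintro x ⟨y, rfl⟩
    obtain ⟨z, rfl⟩ := RingQuot.mkAlgHom_surjective k (SupRel q m n) y
    refine FreeAlgebra.induction k (Fin (m + n))
      (motive := fun z => FF k q m n hq (RingQuot.mkAlgHom k (SupRel q m n) z) ∈
        Algebra.adjoin k (Set.range fun i : Fin (m + n) => Dop q m n i)) ?_ ?_ ?_ ?_ z
    · intro r
      rw [AlgHom.commutes, AlgHom.commutes]
      exact Subalgebra.algebraMap_mem _ r
    · intro i
      have hg := FF_G k q m n hq i
      unfold G at hg
      rw [hg]
      exact Algebra.subset_adjoin ⟨i, rfl⟩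
    · intro a b ha hb
      rw [map_mul, map_mul]
      exact mul_mem ha hb
    · intro a b ha hb
      rw [map_add, map_add]
      exact add_mem ha hb
  · rw [Algebra.adjoin_le_iff]
    rintro x ⟨i, rfl⟩
    exact ⟨G k q m n i, FF_G k q m n hq i⟩

lemma FF_inj (hq : q ≠ 0) : Function.Injective (FF k q m n hq) := by
  rw [injective_iff_map_eq_zero]
  intro x hx
  obtain ⟨c, hc⟩ := Finsupp.mem_span_range_iff_exists_finsupp.mp (memS k q m n x)
  suffices hc0 : c = 0 by
    rw [← hc, hc0, Finsupp.sum_zero_index]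
  ext w₀
  rw [Finsupp.coe_zero, Pi.zero_apply]
  by_contra hne
  have hw₀ : w₀ ∈ c.support := Finsupp.mem_support_iff.mpr hne
  have hp₀2 : ∀ t, (pcnt m n w₀.1).2 t ≤ 1 := pcnt_le_one m n w₀
  have hterm : ∀ w : SP m n, ∃ κ : k,
      (FF k q m n hq (Wm k q m n w)) (Finsupp.single (pcnt m n w₀.1) 1)
        = κ • Finsupp.single (pcnt m n w₀.1 - pcnt m n w.1) 1
      ∧ (κ ≠ 0 ↔ pcnt m n w.1 ≤ pcnt m n w₀.1) := by
    intro w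
    obtain ⟨κ, h1, h2⟩ := key q hq (w.1.1.map (eb m n) ++ w.1.2.map (ef m n)) (pcnt m n w₀.1)
    rw [cntL_pair] at h1 h2
    exact ⟨κ, by rw [FF_W]; exact h1, h2 hp₀2⟩
  choose κf hκ1 hκ2 using hterm
  have h0 : ((FF k q m n hq x) (Finsupp.single (pcnt m n w₀.1) 1)) 0 = 0 := by
    rw [hx]
    simp
  rw [← hc, map_finsuppSum] at h0
  simp only [map_smul] at h0
  simp only [Finsupp.sum] at h0
  rw [LinearMap.sum_apply, Finsupp.finset_sum_apply] at h0
  simp only [LinearMap.smul_apply, hκ1, Finsupp.smul_apply, Finsupp.single_apply,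
    smul_eq_mul] at h0
  have hside : ∀ w ∈ c.support, w ≠ w₀ →
      c w * (κf w * (if pcnt m n w₀.1 - pcnt m n w.1 = 0 then (1 : k) else 0)) = 0 := by
    intro w _ hwne
    by_cases hκ0 : κf w = 0
    · rw [hκ0, zero_mul, mul_zero]
    · have hle : pcnt m n w.1 ≤ pcnt m n w₀.1 := (hκ2 w).mp hκ0
      have hnz : ¬ (pcnt m n w₀.1 - pcnt m n w.1 = 0) := by
        intro h
        have hge := oi_sub_eq_zero m n h
        exact hwne (pcnt_inj m n w w₀ (le_antisymm hle hge))
      rw [if_neg hnz, mul_zero, mul_zero]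
  rw [Finset.sum_eq_single_of_mem w₀ hw₀ hside, oi_sub_self, if_pos rfl, mul_one] at h0
  have hκ0 : κf w₀ ≠ 0 := (hκ2 w₀).mpr (le_refl _)
  exact hne ((mul_eq_zero.mp h0).resolve_right hκ0)

end Hom
end DqAux

/-- The algebra `D_q(m|n)` generated by the `q`-derivatives `∂_i` on `Ω_q(m|n)`
is isomorphic, as an associative algebra, to the quantum affine
`(m|n)`-superspace `A_q^{m|n}`; the isomorphism extends `v_i ↦ ∂_i`. -/
theorem Dq_iso_affine_superspace {k : Type*} [Field k] (q : k) (hq : q ≠ 0) (m n : ℕ) :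
    ∃ φ : RingQuot (SupRel q m n) ≃ₐ[k]
        Algebra.adjoin k (Set.range fun i : Fin (m + n) => Dop q m n i),
      ∀ i : Fin (m + n),
        φ (RingQuot.mkAlgHom k (SupRel q m n) (FreeAlgebra.ι k i)) =
          ⟨Dop q m n i, Algebra.subset_adjoin ⟨i, rfl⟩⟩ := by
  classical
  refine ⟨(AlgEquiv.ofInjective (DqAux.FF k q m n hq) (DqAux.FF_inj k q m n hq)).trans
      (Subalgebra.equivOfEq _ _ (DqAux.FF_range k q m n hq)), fun i => ?_⟩
  apply Subtype.ext
  rw [AlgEquiv.trans_apply, Subalgebra.equivOfEq_apply]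
  show ((AlgEquiv.ofInjective (DqAux.FF k q m n hq) (DqAux.FF_inj k q m n hq))
      ((RingQuot.mkAlgHom k (SupRel q m n)) (FreeAlgebra.ι k i)) : Module.End k (Omega k m n))
    = Dop q m n i
  rw [AlgEquiv.ofInjective_apply]
  exact DqAux.FF_G k q m n hq i
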